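/- If (τ*, ε*) is an optimal point of problem (P2) and ε_M* = 0 for some index 0 ≤ M ≤ K, then ε_i* = 0 for every index M ≤ i ≤ K. -/

import Mathlib

/-- The rate function `r(t,x) = t·log(1 + x/t)` for `t > 0`, and `r(0,x) = 0`. -/
noncomputable def rate (t x : ℝ) : ℝ := if 0 < t then t * Real.log (1 + x / t) else 0

/-- The feasible set of problem (P2): `τ_i ≥ 0`, `0 ≤ ε_i ≤ τ_i·P_P` for `0 ≤ i ≤ K`,
`Σ ε_i ≤ P_A` and `Σ τ_i ≤ 1`. -/
def FeasibleP2 (K : ℕ) (PA PP : ℝ) (τ ε : ℕ → ℝ) : Prop :=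
  (∀ i ≤ K, 0 ≤ τ i) ∧ (∀ i ≤ K, 0 ≤ ε i ∧ ε i ≤ τ i * PP) ∧
  (∑ i ∈ Finset.range (K + 1), ε i ≤ PA) ∧ (∑ i ∈ Finset.range (K + 1), τ i ≤ 1)

/-- The objective of problem (P2): `R(τ,ε) = Σ_{i=1}^K r(τ_i, γ_i·Σ_{j=0}^{i−1} ε_j)`. -/
noncomputable def ObjP2 (K : ℕ) (γ τ ε : ℕ → ℝ) : ℝ :=
  ∑ i ∈ Finset.Icc 1 K, rate (τ i) (γ i * ∑ j ∈ Finset.range i, ε j)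

lemma rate_of_pos {t : ℝ} (ht : 0 < t) (x : ℝ) : rate t x = t * Real.log (1 + x / t) := if_pos ht
lemma rate_of_nonpos {t : ℝ} (ht : ¬ 0 < t) (x : ℝ) : rate t x = 0 := if_neg ht

lemma rate_zero (t : ℝ) : rate t 0 = 0 := by
  unfold rate; split <;> simp

lemma rate_nonneg {t x : ℝ} (hx : 0 ≤ x) : 0 ≤ rate t x := by
  unfold rate; split
  · rename_i ht
    have h1 : (0:ℝ) ≤ x / t := by positivity
    exact mul_nonneg ht.le (Real.log_nonneg (by linarith))
  · exact le_refl 0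

lemma rate_mono {t x y : ℝ} (hx : 0 ≤ x) (hxy : x ≤ y) : rate t x ≤ rate t y := by
  unfold rate; split
  · rename_i ht
    have h1 : (0:ℝ) ≤ x / t := by positivity
    have h2 : x / t ≤ y / t := by gcongr
    exact mul_le_mul_of_nonneg_left (Real.log_le_log (by linarith) (by linarith)) ht.le
  · exact le_refl 0

lemma rate_strict {t x y : ℝ} (ht : 0 < t) (hx : 0 ≤ x) (hxy : x < y) : rate t x < rate t y := by
  rw [rate_of_pos ht, rate_of_pos ht]
  have h1 : (0:ℝ) ≤ x / t := by positivity
  have h2 : x / t < y / t := by gcongr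
  exact mul_lt_mul_of_pos_left (Real.log_lt_log (by linarith) (by linarith)) ht

lemma rate_pos {t x : ℝ} (ht : 0 < t) (hx : 0 < x) : 0 < rate t x := by
  rw [rate_of_pos ht]
  have h1 : (0:ℝ) < x / t := by positivity
  exact mul_pos ht (Real.log_pos (by linarith))

lemma rate_loss {t t' x : ℝ} (h0 : 0 < t') (h1 : t' ≤ t) (hx : 0 ≤ x) :
    rate t x ≤ rate t' x + (t - t') * Real.log (1 + x / t') := by
  have ht : 0 < t := lt_of_lt_of_le h0 h1
  rw [rate_of_pos ht, rate_of_pos h0]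
  have hd : x / t ≤ x / t' := by gcongr
  have hp : (0:ℝ) ≤ x / t := by positivity
  have hlog : Real.log (1 + x / t) ≤ Real.log (1 + x / t') :=
    Real.log_le_log (by linarith) (by linarith)
  nlinarith [mul_le_mul_of_nonneg_left hlog ht.le]

/-- two-point update -/
def upd2 (M i : ℕ) (f : ℕ → ℝ) (a b : ℝ) : ℕ → ℝ :=
  fun j => if j = M then a else if j = i then b else f j

lemma upd2_sum (M i : ℕ) (hMi : M ≠ i) (f : ℕ → ℝ) (a b : ℝ) (k : ℕ) :
    ∑ j ∈ Finset.range k, upd2 M i f a b j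
      = (∑ j ∈ Finset.range k, f j)
        + ((if M < k then a - f M else 0) + (if i < k then b - f i else 0)) := by
  have hpt : ∀ j, upd2 M i f a b j
      = f j + ((if j = M then a - f M else 0) + (if j = i then b - f i else 0)) := by
    intro j
    rcases eq_or_ne j M with rfl | h1
    · simp [upd2, hMi]
    · rcases eq_or_ne j i with rfl | h2
      · simp [upd2, h1]
      · simp [upd2, h1, h2]
  rw [Finset.sum_congr rfl (fun j _ => hpt j)]
  simp [Finset.sum_add_distrib, Finset.sum_ite_eq', Finset.mem_range]

set_option maxHeartbeats 1000000

/-- If `(τ*, ε*)` is optimal for (P2) and `ε_M* = 0` for some `0 ≤ M ≤ K`, then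
`ε_i* = 0` for every `M ≤ i ≤ K`. -/
theorem stmt4 (K : ℕ) (hK : 1 ≤ K) (γ : ℕ → ℝ)
    (hγ : ∀ i, 1 ≤ i → i ≤ K → 0 < γ i)
    (PA PP : ℝ) (hPA : 0 < PA) (hPP : PA < PP)
    (τ ε : ℕ → ℝ) (hfeas : FeasibleP2 K PA PP τ ε)
    (hopt : ∀ τ' ε' : ℕ → ℝ, FeasibleP2 K PA PP τ' ε' →
      ObjP2 K γ τ' ε' ≤ ObjP2 K γ τ ε)
    (M : ℕ) (hM : M ≤ K) (hεM : ε M = 0) :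
    ∀ i, M ≤ i → i ≤ K → ε i = 0 := by
  classical
  obtain ⟨hτ, hεb, hsε, hsτ⟩ := hfeas
  have hPP0 : 0 < PP := hPA.trans hPP
  intro i0 hMi0 hi0K
  by_contra hne
  have hi0pos : 0 < ε i0 := lt_of_le_of_ne (hεb i0 hi0K).1 (Ne.symm hne)
  have hMi0' : M < i0 := lt_of_le_of_ne hMi0 (by rintro rfl; exact hne hεM)
  have hex : ∃ j, M < j ∧ j ≤ K ∧ 0 < ε j := ⟨i0, hMi0', hi0K, hi0pos⟩
  set i := Nat.find hex with hidef
  have hMi : M < i := (Nat.find_spec hex).1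
  have hiK : i ≤ K := (Nat.find_spec hex).2.1
  have hεi : 0 < ε i := (Nat.find_spec hex).2.2
  have hMne : M ≠ i := Nat.ne_of_lt hMi
  have hmin : ∀ j, M ≤ j → j < i → ε j = 0 := by
    intro j hMj hji
    rcases eq_or_lt_of_le hMj with h | h
    · rw [← h]; exact hεM
    · have hj := Nat.find_min hex hji
      push_neg at hj
      have hjK : j ≤ K := le_trans (Nat.le_of_lt hji) hiK
      exact le_antisymm (hj h hjK) (hεb j hjK).1
  set S : ℕ → ℝ := fun k => ∑ j ∈ Finset.range k, ε j with hSdef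
  have hSnn : ∀ k, k ≤ K + 1 → 0 ≤ S k := by
    intro k hk
    apply Finset.sum_nonneg
    intro j hj
    exact (hεb j (by have := Finset.mem_range.mp hj; omega)).1
  have hSeq : ∀ k, M ≤ k → k ≤ i → S k = S M := by
    intro k hMk hki
    have h1 : S k = S M + ∑ j ∈ Finset.Ico M k, ε j := by
      simp only [hSdef]
      rw [Finset.range_eq_Ico]
      exact (by rw [Finset.range_eq_Ico]; exact (Finset.sum_Ico_consecutive ε (Nat.zero_le M) hMk).symm)
    rw [h1, Finset.sum_eq_zero, add_zero]
    intro j hj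
    obtain ⟨hj1, hj2⟩ := Finset.mem_Ico.mp hj
    exact hmin j hj1 (lt_of_lt_of_le hj2 hki)
  have hτi : 0 < τ i := by
    rcases lt_or_ge 0 (τ i) with h | h
    · exact h
    · exfalso; nlinarith [(hεb i hiK).2]
  have hγi : 0 < γ i := hγ i (by omega) hiK
  have hi1 : 1 ≤ i := by omega
  have himem : i ∈ Finset.Icc 1 K := Finset.mem_Icc.mpr ⟨hi1, hiK⟩
  have hSi : S i = S M := hSeq i hMi.le le_rfl
  have hSMnn : 0 ≤ S M := hSnn M (by omega)
  -- feasibility of the perturbed point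
  have hfeas' : ∀ θ δ : ℝ, 0 ≤ θ → θ ≤ τ i → 0 ≤ δ → δ ≤ ε i → δ ≤ (τ M + θ) * PP →
      θ * PP ≤ δ →
      FeasibleP2 K PA PP (upd2 M i τ (τ M + θ) (τ i - θ)) (upd2 M i ε (ε M + δ) (ε i - δ)) := by
    intro θ δ h1 h2 h3 h4 h5 h6
    refine ⟨?_, ?_, ?_, ?_⟩
    · intro j hj
      unfold upd2
      split
      · have := hτ M hM; linarith
      · split
        · linarith
        · exact hτ j hj
    · intro j hj
      unfold upd2
      split
      · exact ⟨by linarith [(hεb M hM).1], by rw [hεM, zero_add]; exact h5⟩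
      · split
        · refine ⟨by linarith, ?_⟩
          have := (hεb i hiK).2
          nlinarith
        · exact hεb j hj
    · rw [upd2_sum M i hMne]
      rw [if_pos (by omega : M < K + 1), if_pos (by omega : i < K + 1)]
      linarith [hsε]
    · rw [upd2_sum M i hMne]
      rw [if_pos (by omega : M < K + 1), if_pos (by omega : i < K + 1)]
      linarith [hsτ]
  -- objective of the perturbed point
  have hObj : ∀ θ δ : ℝ,
      ObjP2 K γ (upd2 M i τ (τ M + θ) (τ i - θ)) (upd2 M i ε (ε M + δ) (ε i - δ))
        = ∑ k ∈ Finset.Icc 1 K, rate (upd2 M i τ (τ M + θ) (τ i - θ) k)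
            (γ k * (S k + ((if M < k then δ else 0) + (if i < k then -δ else 0)))) := by
    intro θ δ
    unfold ObjP2
    apply Finset.sum_congr rfl
    intro k _
    rw [upd2_sum M i hMne]
    congr 2
    simp only [hSdef]
    split_ifs <;> ring
  -- termwise inequality away from i
  have hterm : ∀ θ δ : ℝ, 0 ≤ θ → 0 ≤ δ → (τ M = 0 ∨ θ = 0) → ∀ k ∈ Finset.Icc 1 K, k ≠ i →
      rate (τ k) (γ k * S k) ≤ rate (upd2 M i τ (τ M + θ) (τ i - θ) k)
        (γ k * (S k + ((if M < k then δ else 0) + (if i < k then -δ else 0)))) := by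
    intro θ δ hθ hδ hcase k hk hki
    obtain ⟨hk1, hkK⟩ := Finset.mem_Icc.mp hk
    have hγk : 0 ≤ γ k := (hγ k hk1 hkK).le
    have hSk : 0 ≤ S k := hSnn k (by omega)
    rcases eq_or_ne k M with rfl | hkM
    · rw [if_neg (lt_irrefl k), if_neg (by omega : ¬ i < k)]
      unfold upd2
      rw [if_pos rfl]
      rcases hcase with h | h
      · rw [h, zero_add, add_zero, add_zero]
        rw [rate_of_nonpos (lt_irrefl 0)]
        exact rate_nonneg (by positivity)
      · rw [h, add_zero, add_zero, add_zero]
    · unfold upd2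
      rw [if_neg hkM, if_neg hki]
      apply rate_mono (by positivity)
      have he : 0 ≤ (if M < k then δ else 0) + (if i < k then -δ else 0) := by
        rcases lt_or_ge i k with h | h
        · rw [if_pos (by omega), if_pos h]; linarith
        · rw [if_neg (by omega : ¬ i < k)]
          split <;> linarith
      nlinarith
  by_cases hτM : 0 < τ M
  · -- case A : τ M > 0, move ε mass only
    set δ := min (ε i) (τ M * PP) with hδdef
    have hδpos : 0 < δ := lt_min hεi (by positivity)
    have hf := hfeas' 0 δ le_rfl hτi.le hδpos.le (min_le_left _ _)
      (by rw [add_zero]; exact min_le_right _ _) (by rw [zero_mul]; exact hδpos.le)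
    have hiM : ¬ i = M := fun h => hMne h.symm
    have hst : rate (τ i) (γ i * S i) < rate (upd2 M i τ (τ M + 0) (τ i - 0) i)
        (γ i * (S i + ((if M < i then δ else 0) + (if i < i then -δ else 0)))) := by
      simp only [upd2, if_neg hiM, if_pos rfl, if_pos hMi, if_neg (lt_irrefl i),
        add_zero, sub_zero]
      apply rate_strict hτi (mul_nonneg hγi.le (hSnn i (by omega)))
      nlinarith [hSnn i (by omega)]
    have hlt : ObjP2 K γ τ ε <
        ObjP2 K γ (upd2 M i τ (τ M + 0) (τ i - 0)) (upd2 M i ε (ε M + δ) (ε i - δ)) := by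
      rw [hObj 0 δ]
      unfold ObjP2
      apply Finset.sum_lt_sum
      · intro k hk
        rcases eq_or_ne k i with rfl | hki
        · exact hst.le
        · exact hterm 0 δ le_rfl hδpos.le (Or.inr rfl) k hk hki
      · exact ⟨i, himem, hst⟩
    exact absurd (hopt _ _ hf) (not_le.mpr hlt)
  · have hτM0 : τ M = 0 := le_antisymm (not_lt.mp hτM) (hτ M hM)
    rcases eq_or_lt_of_le hSMnn with hSM | hSM
    · -- case B(i) : τ M = 0, S M = 0
      set θ := min (τ i / 2) (ε i / PP) with hθdef
      have hθpos : 0 < θ := lt_min (by positivity) (by positivity)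
      have hθ1 : θ ≤ τ i / 2 := min_le_left _ _
      have hθ2 : θ * PP ≤ ε i := (le_div_iff₀ hPP0).mp (min_le_right _ _)
      have hf := hfeas' θ (θ * PP) hθpos.le (by linarith) (by positivity) hθ2
        (by rw [hτM0, zero_add]) le_rfl
      have hiM : ¬ i = M := fun h => hMne h.symm
      have hst : rate (τ i) (γ i * S i) < rate (upd2 M i τ (τ M + θ) (τ i - θ) i)
          (γ i * (S i + ((if M < i then θ * PP else 0) + (if i < i then -(θ * PP) else 0)))) := by
        simp only [upd2, hiM, hMi, eq_self_iff_true, if_true, if_false, lt_self_iff_false,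
          add_zero]
        rw [hSi, ← hSM, mul_zero, rate_zero, zero_add]
        exact rate_pos (by linarith) (mul_pos hγi (mul_pos hθpos hPP0))
      have hlt : ObjP2 K γ τ ε <
          ObjP2 K γ (upd2 M i τ (τ M + θ) (τ i - θ)) (upd2 M i ε (ε M + θ * PP) (ε i - θ * PP)) := by
        rw [hObj θ (θ * PP)]
        unfold ObjP2
        apply Finset.sum_lt_sum
        · intro k hk
          rcases eq_or_ne k i with rfl | hki
          · exact hst.le
          · exact hterm θ (θ * PP) hθpos.le (by positivity) (Or.inl hτM0) k hk hki
        · exact ⟨i, himem, hst⟩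
      exact absurd (hopt _ _ hf) (not_le.mpr hlt)
    · -- case B(ii) : τ M = 0, S M > 0
      have hM1 : 1 ≤ M := by
        by_contra h
        have hM0 : M = 0 := by omega
        rw [hM0] at hSM
        simp [hSdef] at hSM
      have hγM : 0 < γ M := hγ M hM1 hM
      set θ := min (τ i / 2) (min (ε i / PP) (γ M * τ i / (4 * γ i))) with hθdef
      have hθpos : 0 < θ := lt_min (by positivity) (lt_min (by positivity) (by positivity))
      have hθ1 : θ ≤ τ i / 2 := min_le_left _ _
      have hθ2 : θ * PP ≤ ε i := (le_div_iff₀ hPP0).mp ((min_le_right _ _).trans (min_le_left _ _))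
      have hθ3 : θ ≤ γ M * τ i / (4 * γ i) := (min_le_right _ _).trans (min_le_right _ _)
      have hτiθ : 0 < τ i - θ := by linarith
      have hf := hfeas' θ (θ * PP) hθpos.le (by linarith) (by positivity) hθ2
        (by rw [hτM0, zero_add]) le_rfl
      have hiM : ¬ i = M := fun h => hMne h.symm
      have hxnn : 0 ≤ γ i * S M := mul_nonneg hγi.le hSM.le
      -- key log comparison
      have hlog : Real.log (1 + γ i * S M / (τ i - θ)) < Real.log (1 + γ M * S M / θ) := by
        apply Real.log_lt_log (by positivity)
        have h4 : 4 * γ i * θ ≤ γ M * τ i := by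
          rw [le_div_iff₀ (by positivity)] at hθ3; linarith
        have h1 : γ i * S M / (τ i - θ) < γ M * S M / θ := by
          rw [div_lt_div_iff₀ hτiθ hθpos]
          nlinarith [mul_le_mul_of_nonneg_left h4 hSM.le,
            mul_pos (mul_pos hγi hSM) hθpos,
            mul_le_mul_of_nonneg_left (show τ i / 2 ≤ τ i - θ by linarith)
              (mul_pos hγM hSM).le]
        linarith
      have hlt : ObjP2 K γ τ ε <
          ObjP2 K γ (upd2 M i τ (τ M + θ) (τ i - θ)) (upd2 M i ε (ε M + θ * PP) (ε i - θ * PP)) := by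
        rw [hObj θ (θ * PP)]
        unfold ObjP2
        have hMmem : M ∈ (Finset.Icc 1 K).erase i :=
          Finset.mem_erase.mpr ⟨hMne, Finset.mem_Icc.mpr ⟨hM1, hM⟩⟩
        have e1 : ∀ F : ℕ → ℝ, ∑ k ∈ Finset.Icc 1 K, F k
            = F i + (F M + ∑ k ∈ ((Finset.Icc 1 K).erase i).erase M, F k) := by
          intro F
          rw [← Finset.add_sum_erase _ F himem, ← Finset.add_sum_erase _ F hMmem]
        rw [e1, e1]
        have hrest : ∑ k ∈ ((Finset.Icc 1 K).erase i).erase M,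
              rate (τ k) (γ k * ∑ j ∈ Finset.range k, ε j)
            ≤ ∑ k ∈ ((Finset.Icc 1 K).erase i).erase M,
              rate (upd2 M i τ (τ M + θ) (τ i - θ) k)
                (γ k * (S k + ((if M < k then θ * PP else 0) + if i < k then -(θ * PP) else 0))) := by
          apply Finset.sum_le_sum
          intro k hk
          obtain ⟨hkM, hk'⟩ := Finset.mem_erase.mp hk
          obtain ⟨hki, hks⟩ := Finset.mem_erase.mp hk'
          exact hterm θ (θ * PP) hθpos.le (by positivity) (Or.inl hτM0) k hks hki
        -- term at M
        have eGM : rate (upd2 M i τ (τ M + θ) (τ i - θ) M)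
            (γ M * (S M + ((if M < M then θ * PP else 0) + if i < M then -(θ * PP) else 0)))
            = θ * Real.log (1 + γ M * S M / θ) := by
          simp only [upd2, eq_self_iff_true, if_true, lt_self_iff_false, if_false,
            (show ¬ i < M by omega), add_zero, hτM0, zero_add]
          exact rate_of_pos hθpos _
        have eFM : rate (τ M) (γ M * S M) = 0 := by
          rw [hτM0, rate_of_nonpos (lt_irrefl 0)]
        -- term at i
        have eGi : rate (upd2 M i τ (τ M + θ) (τ i - θ) i)
            (γ i * (S i + ((if M < i then θ * PP else 0) + if i < i then -(θ * PP) else 0)))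
            = rate (τ i - θ) (γ i * (S M + θ * PP)) := by
          simp only [upd2, hiM, hMi, eq_self_iff_true, if_true, if_false, lt_self_iff_false,
            add_zero, hSi]
        have hGi1 : rate (τ i - θ) (γ i * S M) ≤ rate (τ i - θ) (γ i * (S M + θ * PP)) := by
          apply rate_mono hxnn
          nlinarith [mul_pos hθpos hPP0]
        have hloss : rate (τ i) (γ i * S M) ≤ rate (τ i - θ) (γ i * S M)
            + θ * Real.log (1 + γ i * S M / (τ i - θ)) := by
          have h := rate_loss hτiθ (by linarith : τ i - θ ≤ τ i) hxnn
          have h2 : τ i - (τ i - θ) = θ := by ring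
          rwa [h2] at h
        have hmul : θ * Real.log (1 + γ i * S M / (τ i - θ))
            < θ * Real.log (1 + γ M * S M / θ) := by
          exact mul_lt_mul_of_pos_left hlog hθpos
        rw [eGM, eFM, eGi, show (∑ j ∈ Finset.range i, ε j) = S M from hSi]
        linarith [hrest, hGi1, hloss, hmul]
      exact absurd (hopt _ _ hf) (not_le.mpr hlt)
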